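/- Let R be a commutative ring, T a 1-tilting R-module with tilting class T^⊥ = Gen(T), and J an ideal such that M = JM for every M ∈ Gen(T). Then there exists a finitely generated ideal I ⊆ J with M = IM for every M ∈ Gen(T). -/

import Mathlib

universe u

/-- `ExtVanishes R T N` encodes `Ext¹_R(T, N) = 0`: every short exact sequence
`0 → N → E → T → 0` splits, i.e. every surjection onto `T` with kernel
isomorphic to `N` admits a section. -/
def ExtVanishes (R : Type u) [Ring R] (T : Type u) [AddCommGroup T]
    [Module R T] (N : Type u) [AddCommGroup N] [Module R N] : Prop :=
  ∀ (E : Type u) [AddCommGroup E] [Module R E] (π : E →ₗ[R] T),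
    Function.Surjective π → Nonempty (↥(LinearMap.ker π) ≃ₗ[R] N) →
    ∃ σ : T →ₗ[R] E, π ∘ₗ σ = LinearMap.id

/-- `MemGen R T M` : `M ∈ Gen(T)`, i.e. `M` is a homomorphic image of a direct
sum of copies of `T`. -/
def MemGen (R : Type u) [Ring R] (T : Type u) [AddCommGroup T] [Module R T]
    (M : Type u) [AddCommGroup M] [Module R M] : Prop :=
  ∃ (X : Type u) (φ : (X →₀ T) →ₗ[R] M), Function.Surjective φ

/-- `MemAdd R T M` : `M ∈ Add(T)`, i.e. `M` is a direct summand of a direct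
sum of copies of `T` (witnessed by a split surjection). -/
def MemAdd (R : Type u) [Ring R] (T : Type u) [AddCommGroup T] [Module R T]
    (M : Type u) [AddCommGroup M] [Module R M] : Prop :=
  ∃ (X : Type u) (p : (X →₀ T) →ₗ[R] M) (s : M →ₗ[R] (X →₀ T)),
    p ∘ₗ s = LinearMap.id

/-- `ProjDimLE1 R M` : `M` has projective dimension at most `1`, i.e. `M` is a
quotient of a free module by a projective submodule. -/
def ProjDimLE1 (R : Type u) [Ring R] (M : Type u) [AddCommGroup M]
    [Module R M] : Prop :=
  ∃ (κ : Type u) (K : Submodule R (κ →₀ R)),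
    Module.Projective R ↥K ∧ Nonempty (((κ →₀ R) ⧸ K) ≃ₗ[R] M)

/-- `IsOneTilting R T` : `T` is a 1-tilting module: `pd T ≤ 1`,
`Ext¹_R(T, T^{(X)}) = 0` for every set `X`, and there is an exact sequence
`0 → R → T₀ → T₁ → 0` with `T₀, T₁ ∈ Add(T)` (here `T₀` is realized as a
direct summand of a direct sum of copies of `T`). -/
def IsOneTilting (R : Type u) [Ring R] (T : Type u) [AddCommGroup T]
    [Module R T] : Prop :=
  ProjDimLE1 R T ∧
  (∀ X : Type u, ExtVanishes R T (X →₀ T)) ∧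
  ∃ (X : Type u) (T0 C : Submodule R (X →₀ T)), IsCompl T0 C ∧
    ∃ f : R →ₗ[R] ↥T0, Function.Injective f ∧
      MemAdd R T (↥T0 ⧸ LinearMap.range f)


open LinearMap Submodule Function

section Aux
variable {R : Type u} [CommRing R]

/-- Lifting along a pullback: if every extension of `N` by `M'` splits, `π : E ↠ M`
has kernel `≃ N`, and `u : M' → M`, then `u` lifts through `π`. -/
lemma pullback_lift {M M' E N : Type u} [AddCommGroup M] [Module R M]
    [AddCommGroup M'] [Module R M'] [AddCommGroup E] [Module R E]
    [AddCommGroup N] [Module R N]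
    (hS : ExtVanishes R M' N) (π : E →ₗ[R] M) (hπ : Surjective π)
    (hker : Nonempty (↥(ker π) ≃ₗ[R] N)) (u : M' →ₗ[R] M) :
    ∃ σ : M' →ₗ[R] E, π ∘ₗ σ = u := by
  set PB : Submodule R (E × M') := ker ((π ∘ₗ fst R E M') - (u ∘ₗ snd R E M')) with hPB
  have memPB : ∀ z : E × M', z ∈ PB ↔ π z.1 = u z.2 := by
    intro z
    simp [hPB, sub_eq_zero]
  set q : ↥PB →ₗ[R] M' := (snd R E M') ∘ₗ PB.subtype with hq
  have hqsurj : Surjective q := by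
    intro m'
    obtain ⟨e, he⟩ := hπ (u m')
    exact ⟨⟨(e, m'), (memPB _).2 he⟩, rfl⟩
  -- kernel of q is isomorphic to kernel of π
  have a0 : ∀ z : ↥(ker q), π z.1.1.1 = 0 := by
    rintro ⟨⟨⟨e, m'⟩, hz⟩, hz2⟩
    have h1 : m' = 0 := hz2
    have := (memPB _).1 hz
    simp only [h1, map_zero] at this
    exact this
  set a : ↥(ker q) →ₗ[R] ↥(ker π) :=
    codRestrict (ker π) ((fst R E M') ∘ₗ PB.subtype ∘ₗ (ker q).subtype) a0 with ha
  set b0 : ↥(ker π) →ₗ[R] ↥PB :=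
    codRestrict PB ((inl R E M') ∘ₗ (ker π).subtype)
      (fun k => (memPB _).2 (by simp [k.2])) with hb0
  set b : ↥(ker π) →ₗ[R] ↥(ker q) :=
    codRestrict (ker q) b0 (fun k => by simp [hq, hb0, mem_ker]) with hb
  have hab : ∀ k, a (b k) = k := by
    intro k; ext; rfl
  have hba : ∀ z, b (a z) = z := by
    rintro ⟨⟨⟨e, m'⟩, hz⟩, hz2⟩
    have h1 : m' = 0 := hz2
    ext <;> simp [hb, hb0, ha, h1] <;> rfl
  have hkerq : Nonempty (↥(ker q) ≃ₗ[R] N) := by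
    obtain ⟨ι⟩ := hker
    exact ⟨LinearEquiv.trans
      { toLinearMap := a, invFun := ⇑b, left_inv := hba, right_inv := hab } ι⟩
  obtain ⟨s, hs⟩ := hS (↥PB) q hqsurj hkerq
  refine ⟨(fst R E M') ∘ₗ PB.subtype ∘ₗ s, ?_⟩
  ext m'
  have h1 : π (s m').1.1 = u (s m').1.2 := (memPB _).1 (s m').2
  have h2 : (s m').1.2 = m' := congrArg (fun f => f m') (congrArg DFunLike.coe hs)
  show π (s m').1.1 = u m'
  rw [h1, h2]

/-- Pushout extension: if `f : A ↪ B` has cokernel `Q` (realized by a surjection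
`π₁ : B ↠ Q` with `ker π₁ = range f`), and every extension of `N` by `Q` splits,
then every `g : A → N` extends to `B`. -/
lemma pushout_extend {A B Q N : Type u} [AddCommGroup A] [Module R A]
    [AddCommGroup B] [Module R B] [AddCommGroup Q] [Module R Q]
    [AddCommGroup N] [Module R N]
    (hS : ExtVanishes R Q N) (f : A →ₗ[R] B) (hf : Injective f)
    (π₁ : B →ₗ[R] Q) (hπ₁ : Surjective π₁) (hk : ker π₁ = range f)
    (g : A →ₗ[R] N) : ∃ h : B →ₗ[R] N, h ∘ₗ f = g := by
  set w : A →ₗ[R] B × N := f.prod (-g) with hw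
  set W : Submodule R (B × N) := range w with hW
  set π : (B × N) ⧸ W →ₗ[R] Q := W.liftQ (π₁ ∘ₗ fst R B N) (by
    rintro z ⟨a, rfl⟩
    simp only [mem_ker, coe_comp, comp_apply, fst_apply, hw, prod_apply, Pi.prod]
    rw [← mem_ker, hk]
    exact ⟨a, rfl⟩) with hπ
  have hπmk : ∀ z : B × N, π (W.mkQ z) = π₁ z.1 := fun z => rfl
  have hπsurj : Surjective π := by
    intro t
    obtain ⟨b, rfl⟩ := hπ₁ t
    exact ⟨W.mkQ (b, 0), rfl⟩
  set ν : N →ₗ[R] (B × N) ⧸ W := W.mkQ ∘ₗ inr R B N with hν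
  have hνinj : Injective ν := by
    intro n₁ n₂ h
    have h' : ((0:B), n₁) - ((0:B), n₂) ∈ W := (Submodule.Quotient.eq W).1 h
    obtain ⟨a, ha⟩ := (by simpa using h' : ((0 : B), n₁ - n₂) ∈ W)
    have ha1 : f a = 0 := congrArg Prod.fst ha
    have : a = 0 := hf (by simpa using ha1)
    have ha2 : -g a = n₁ - n₂ := congrArg Prod.snd ha
    rw [this] at ha2
    simpa [sub_eq_zero] using ha2.symm
  have hνrange : range ν = ker π := by
    apply le_antisymm
    · rintro z ⟨n, rfl⟩
      show π (W.mkQ (0, n)) = 0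
      rw [hπmk]
      simp
    · rintro z hz
      obtain ⟨⟨b, n⟩, rfl⟩ := W.mkQ_surjective z
      have hb : π₁ b = 0 := hz
      rw [← mem_ker, hk] at hb
      obtain ⟨a, rfl⟩ := hb
      refine ⟨n + g a, ?_⟩
      show Submodule.Quotient.mk ((0:B), n + g a) = Submodule.Quotient.mk (f a, n)
      rw [Submodule.Quotient.eq]
      exact ⟨-a, by simp [hw, Pi.prod]⟩
  obtain ⟨σ, hσ⟩ := hS ((B × N) ⧸ W) π hπsurj
    ⟨(LinearEquiv.ofEq _ _ hνrange.symm).trans (LinearEquiv.ofInjective ν hνinj).symm⟩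
  set δ : B →ₗ[R] (B × N) ⧸ W := W.mkQ ∘ₗ inl R B N - σ ∘ₗ π₁ with hδ
  have hδker : ∀ b, δ b ∈ range ν := by
    intro b
    rw [hνrange, mem_ker]
    have h1 : π (σ (π₁ b)) = π₁ b := congrArg (fun F => F (π₁ b)) (congrArg DFunLike.coe hσ)
    have h2 : π (δ b) = π (W.mkQ (b, 0)) - π (σ (π₁ b)) := by simp [hδ]
    rw [h2, hπmk, h1, sub_self]
  set h : B →ₗ[R] N :=
    ((LinearEquiv.ofInjective ν hνinj).symm : ↥(range ν) ≃ₗ[R] N).toLinearMap ∘ₗ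
      codRestrict (range ν) δ hδker with hh
  refine ⟨h, ?_⟩
  ext a
  have hδf : δ (f a) = ν (g a) := by
    have h1 : π₁ (f a) = 0 := by rw [← mem_ker, hk]; exact ⟨a, rfl⟩
    have h2 : W.mkQ (f a, 0) = W.mkQ (0, g a) := by
      show Submodule.Quotient.mk (f a, (0:N)) = Submodule.Quotient.mk ((0:B), g a)
      rw [Submodule.Quotient.eq]
      exact ⟨a, by simp [hw, Pi.prod]⟩
    simp [hδ, h1, h2, hν]
  show ((LinearEquiv.ofInjective ν hνinj).symm) ⟨δ (f a), hδker _⟩ = g a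
  have : (⟨δ (f a), hδker _⟩ : ↥(range ν)) = (LinearEquiv.ofInjective ν hνinj) (g a) := by
    ext
    simp [hδf, LinearEquiv.ofInjective_apply]
  rw [this, LinearEquiv.symm_apply_apply]

/-- If every extension of `N` by `T` splits, so does every extension of `N` by `X →₀ T`. -/
lemma extVanishes_finsupp {T N : Type u} [AddCommGroup T] [Module R T]
    [AddCommGroup N] [Module R N] (X : Type u) (hN : ExtVanishes R T N) :
    ExtVanishes R (X →₀ T) N := by
  intro E _ _ π hπ hker
  have hx : ∀ x : X, ∃ σx : T →ₗ[R] E, π ∘ₗ σx = Finsupp.lsingle x :=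
    fun x => pullback_lift hN π hπ hker (Finsupp.lsingle x)
  choose σs hσs using hx
  refine ⟨Finsupp.lsum R σs, ?_⟩
  apply Finsupp.lhom_ext'
  intro x
  rw [LinearMap.comp_assoc]
  have : (Finsupp.lsum R σs) ∘ₗ Finsupp.lsingle x = σs x := by
    apply LinearMap.ext; intro t; simp
  rw [this, hσs x, LinearMap.id_comp]

/-- splitting passes to retracts (in the first argument). -/
lemma extVanishes_retract {F' M' N : Type u} [AddCommGroup F'] [Module R F']
    [AddCommGroup M'] [Module R M'] [AddCommGroup N] [Module R N]
    (hF : ExtVanishes R F' N) (p : F' →ₗ[R] M') (s : M' →ₗ[R] F')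
    (hps : p ∘ₗ s = LinearMap.id) : ExtVanishes R M' N := by
  intro E _ _ π hπ hker
  obtain ⟨σ', hσ'⟩ := pullback_lift hF π hπ hker p
  exact ⟨σ' ∘ₗ s, by rw [← LinearMap.comp_assoc, hσ', hps]⟩

variable {κ : Type u} (K : Submodule R (κ →₀ R))

def Lifts (N : Type u) [AddCommGroup N] [Module R N] : Prop :=
  ∀ g : ↥K →ₗ[R] N, ∃ G : (κ →₀ R) →ₗ[R] N, G ∘ₗ K.subtype = g

variable {K}

lemma lifts_of_ext {T N : Type u} [AddCommGroup T] [Module R T]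
    [AddCommGroup N] [Module R N] (e : ((κ →₀ R) ⧸ K) ≃ₗ[R] T)
    (hN : ExtVanishes R T N) : Lifts K N := by
  intro g
  refine pushout_extend (A := ↥K) hN K.subtype (injective_subtype K)
    (e.toLinearMap ∘ₗ K.mkQ) (e.surjective.comp (mkQ_surjective K)) ?_ g
  rw [ker_comp, LinearEquiv.ker, comap_bot, ker_mkQ, range_subtype]

lemma ext_of_lifts {T N : Type u} [AddCommGroup T] [Module R T]
    [AddCommGroup N] [Module R N] (e : ((κ →₀ R) ⧸ K) ≃ₗ[R] T)
    (hL : Lifts K N) : ExtVanishes R T N := by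
  intro E _ _ π hπ hker
  obtain ⟨ι⟩ := hker
  obtain ⟨ℓ, hℓ⟩ := Module.projective_lifting_property π (e.toLinearMap ∘ₗ K.mkQ) hπ
  have hℓK : ∀ k : ↥K, ℓ k.1 ∈ ker π := by
    intro k
    rw [mem_ker]
    have h1 : π (ℓ k.1) = e (K.mkQ k.1) := congrArg (fun F => F k.1) (congrArg DFunLike.coe hℓ)
    have h2 : K.mkQ k.1 = 0 := (Submodule.Quotient.mk_eq_zero K).2 k.2
    rw [h1, h2, map_zero]
  set g' : ↥K →ₗ[R] N :=
    ι.toLinearMap ∘ₗ codRestrict (ker π) (ℓ ∘ₗ K.subtype) (fun k => hℓK k) with hg'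
  obtain ⟨G, hG⟩ := hL g'
  set δ : (κ →₀ R) →ₗ[R] E :=
    ℓ - (ker π).subtype ∘ₗ ι.symm.toLinearMap ∘ₗ G with hδ
  have hKδ : K ≤ ker δ := by
    intro x hx
    have hGx : G x = g' ⟨x, hx⟩ := congrArg (fun F => F ⟨x, hx⟩) (congrArg DFunLike.coe hG)
    rw [mem_ker]
    have : δ x = ℓ x - ((ker π).subtype (ι.symm (G x))) := rfl
    rw [this, hGx, hg']
    show ℓ x - ((ker π).subtype (ι.symm (ι _))) = 0
    rw [ι.symm_apply_apply]
    show ℓ x - ℓ x = 0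
    rw [sub_self]
  set δ' := K.liftQ δ hKδ with hδ'
  refine ⟨δ' ∘ₗ e.symm.toLinearMap, ?_⟩
  apply LinearMap.ext
  intro t
  obtain ⟨x, hx⟩ := K.mkQ_surjective (e.symm t)
  show π (δ' (e.symm t)) = t
  rw [← hx]
  have h1 : δ' (K.mkQ x) = δ x := rfl
  have h2 : π (δ x) = π (ℓ x) - π ((ker π).subtype (ι.symm (G x))) := by
    simp [hδ]
  have h3 : π ((ker π).subtype (ι.symm (G x))) = 0 := (ι.symm (G x)).2
  have h4 : π (ℓ x) = e (K.mkQ x) := congrArg (fun F => F x) (congrArg DFunLike.coe hℓ)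
  rw [h1, h2, h3, h4, sub_zero, hx, e.apply_symm_apply]

lemma lifts_pi {ι : Type u} (Ns : ι → Type u) [∀ i, AddCommGroup (Ns i)]
    [∀ i, Module R (Ns i)] (h : ∀ i, Lifts K (Ns i)) :
    Lifts K ((i : ι) → Ns i) := by
  intro g
  have hi : ∀ i, ∃ Gi : (κ →₀ R) →ₗ[R] Ns i,
      Gi ∘ₗ K.subtype = (LinearMap.proj i) ∘ₗ g :=
    fun i => h i ((LinearMap.proj i) ∘ₗ g)
  choose Gs hGs using hi
  refine ⟨LinearMap.pi Gs, ?_⟩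
  apply LinearMap.ext
  intro k
  funext i
  exact congrArg (fun F => F k) (congrArg DFunLike.coe (hGs i))

lemma lifts_congr {N N' : Type u} [AddCommGroup N] [Module R N]
    [AddCommGroup N'] [Module R N'] (h : Lifts K N) (e : N ≃ₗ[R] N') :
    Lifts K N' := by
  intro g
  obtain ⟨G, hG⟩ := h (e.symm.toLinearMap ∘ₗ g)
  refine ⟨e.toLinearMap ∘ₗ G, ?_⟩
  rw [LinearMap.comp_assoc, hG, ← LinearMap.comp_assoc]
  apply LinearMap.ext
  intro k
  simp

lemma smul_top_finsupp {T : Type u} [AddCommGroup T] [Module R T]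
    (I : Ideal R) (h : I • (⊤ : Submodule R T) = ⊤) (X : Type u) :
    I • (⊤ : Submodule R (X →₀ T)) = ⊤ := by
  refine le_antisymm le_top ?_
  calc (⊤ : Submodule R (X →₀ T)) = ⨆ x, range (Finsupp.lsingle x (R := R)) :=
        Finsupp.iSup_lsingle_range.symm
    _ = ⨆ x : X, Submodule.map (Finsupp.lsingle x) (I • ⊤) :=
        iSup_congr fun x => by rw [h, Submodule.map_top]
    _ = ⨆ x : X, I • Submodule.map (Finsupp.lsingle x (R := R)) ⊤ :=
        iSup_congr fun x => Submodule.map_smul'' I ⊤ (Finsupp.lsingle x)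
    _ ≤ I • ⊤ := iSup_le fun x => smul_mono le_rfl le_top

lemma smul_top_of_surj {M M' : Type u} [AddCommGroup M] [Module R M]
    [AddCommGroup M'] [Module R M'] (φ : M →ₗ[R] M') (hφ : Surjective φ)
    (I : Ideal R) (h : I • (⊤ : Submodule R M) = ⊤) :
    I • (⊤ : Submodule R M') = ⊤ := by
  have : Submodule.map φ ⊤ = ⊤ := by
    rw [Submodule.map_top, range_eq_top]
    exact hφ
  calc I • (⊤ : Submodule R M') = I • Submodule.map φ ⊤ := by rw [this]
    _ = Submodule.map φ (I • ⊤) := (Submodule.map_smul'' I ⊤ φ).symm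
    _ = Submodule.map φ ⊤ := by rw [h]
    _ = ⊤ := this

end Aux

/-- Let `R` be a commutative ring, `T` a 1-tilting module (so
that the tilting class `T^⊥` equals `Gen(T)`), and `J` an ideal with `M = JM`
for every `M ∈ Gen(T)`.  Then there is a finitely generated ideal `I ⊆ J`
with `M = IM` for every `M ∈ Gen(T)`. -/
theorem exists_fg_subideal_divisibility (R : Type u) [CommRing R]
    (T : Type u) [AddCommGroup T] [Module R T]
    (hT : IsOneTilting R T) (J : Ideal R)
    (hJ : ∀ (M : Type u) [AddCommGroup M] [Module R M],
      MemGen R T M → J • (⊤ : Submodule R M) = ⊤) :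
    ∃ I : Ideal R, I.FG ∧ I ≤ J ∧
      ∀ (M : Type u) [AddCommGroup M] [Module R M],
        MemGen R T M → I • (⊤ : Submodule R M) = ⊤ := by
  obtain ⟨⟨κ, K, -, ⟨e⟩⟩, hExtSum, X, T0, C, hcompl, f, hfinj, X', p, s, hps⟩ := hT
  -- the big product module N = T^T
  set N := T → T with hN
  have hLift_T : Lifts K T :=
    lifts_congr (lifts_of_ext e (hExtSum PUnit))
      (Finsupp.LinearEquiv.finsuppUnique R T PUnit)
  have hLift_N : Lifts K N := lifts_pi (fun _ : T => T) (fun _ => hLift_T)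
  have hEN : ExtVanishes R T N := ext_of_lifts e hLift_N
  have hE2 : ExtVanishes R (X' →₀ T) N := extVanishes_finsupp X' hEN
  have hE3 : ExtVanishes R (↥T0 ⧸ LinearMap.range f) N :=
    extVanishes_retract hE2 p s hps
  have hext : ∀ g : R →ₗ[R] N, ∃ h : ↥T0 →ₗ[R] N, h ∘ₗ f = g := fun g =>
    pushout_extend hE3 f hfinj (LinearMap.range f).mkQ
      (mkQ_surjective _) (ker_mkQ _) g
  -- N ∈ Gen(T)
  have hhn : ∀ n : N, ∃ h : ↥T0 →ₗ[R] N, h (f 1) = n := by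
    intro n
    obtain ⟨h, hh⟩ := hext (LinearMap.toSpanSingleton R N n)
    refine ⟨h, ?_⟩
    have : h (f 1) = LinearMap.toSpanSingleton R N n 1 :=
      congrArg (fun F => F 1) (congrArg DFunLike.coe hh)
    rw [this, LinearMap.toSpanSingleton_apply, one_smul]
  choose hmap hhmap using hhn
  set pr : (X →₀ T) →ₗ[R] ↥T0 := T0.projectionOnto C hcompl with hpr
  set ψ : ((N × X) →₀ T) →ₗ[R] N :=
    Finsupp.lsum R (fun q : N × X => (hmap q.1 ∘ₗ pr) ∘ₗ Finsupp.lsingle q.2) with hψ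
  have hψs : Surjective ψ := by
    have key : ∀ n : N, LinearMap.range (hmap n ∘ₗ pr) ≤ LinearMap.range ψ := by
      intro n
      rw [range_eq_map, ← Finsupp.iSup_lsingle_range, Submodule.map_iSup]
      apply iSup_le
      intro x
      rw [← LinearMap.range_comp]
      have hcomm : (hmap n ∘ₗ pr) ∘ₗ Finsupp.lsingle x = ψ ∘ₗ Finsupp.lsingle (n, x) := by
        apply LinearMap.ext
        intro t
        simp [hψ]
      rw [hcomm]
      exact LinearMap.range_comp_le_range _ _
    rw [← range_eq_top]
    rw [eq_top_iff]
    intro n _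
    apply key n
    refine ⟨(f 1 : X →₀ T), ?_⟩
    show hmap n (pr (f 1 : X →₀ T)) = n
    rw [hpr, Submodule.projectionOnto_apply_left hcompl (f 1), hhmap n]
  have hMemGenN : MemGen R T N := ⟨N × X, ψ, hψs⟩
  -- J • N = N, extract finitely generated witness via the diagonal element
  have hJN : J • (⊤ : Submodule R N) = ⊤ := hJ N hMemGenN
  have hd : (_root_.id : T → T) ∈ J • (⊤ : Submodule R N) := by rw [hJN]; trivial
  have hfg : ∃ I : Ideal R, I.FG ∧ I ≤ J ∧
      (_root_.id : T → T) ∈ I • (⊤ : Submodule R N) := by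
    refine Submodule.smul_induction_on hd ?_ ?_
    · intro r hr n _
      exact ⟨Ideal.span {r}, Submodule.fg_span_singleton r,
        (Ideal.span_singleton_le_iff_mem J).2 hr,
        Submodule.smul_mem_smul (Ideal.subset_span rfl) trivial⟩
    · rintro x y ⟨I₁, h₁, hle₁, hx⟩ ⟨I₂, h₂, hle₂, hy⟩
      exact ⟨I₁ ⊔ I₂, Submodule.FG.sup h₁ h₂, sup_le hle₁ hle₂,
        Submodule.add_mem _ (Submodule.smul_mono_left le_sup_left hx)
          (Submodule.smul_mono_left le_sup_right hy)⟩
  obtain ⟨I, hIfg, hIJ, hdI⟩ := hfg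
  -- I • T = T
  have hIT : I • (⊤ : Submodule R T) = ⊤ := by
    rw [eq_top_iff]
    intro t _
    have hproj : (LinearMap.proj t : N →ₗ[R] T) (_root_.id : T → T) ∈
        Submodule.map (LinearMap.proj t : N →ₗ[R] T) (I • ⊤) :=
      Submodule.mem_map_of_mem hdI
    rw [Submodule.map_smul''] at hproj
    have : (LinearMap.proj t : N →ₗ[R] T) (_root_.id : T → T) = t := rfl
    rw [this] at hproj
    exact Submodule.smul_mono le_rfl le_top hproj
  refine ⟨I, hIfg, hIJ, ?_⟩
  intro M _ _ hM
  obtain ⟨Y, φ, hφ⟩ := hM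
  exact smul_top_of_surj φ hφ I (smul_top_finsupp I hIT Y)
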